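/- Let Ω = (0, L) × (0, 1) ⊂ ℝ² with L > 0, e_g = (0, −1), u_s ∈ ℝ, ν ≥ 0, κ > 0, and let y denote the second coordinate function. Let u : cl(Ω) × [0, T] → ℝ² be continuously differentiable with div u = 0 in Ω and u·n = 0 on ∂Ω, let ω, p̄ : cl(Ω) × [0, T] → ℝ be continuously differentiable in space, and let φ : cl(Ω) × [0, T] → ℝ be C¹ in time and C² in space. Assume: (i) the momentum equation ∂u/∂t + ω × u + ∇p̄ = −ν ∇×ω + φ e_g holds in Ω, (ii) the transport equation ∂φ/∂t + (u + u_s e_g)·∇φ = κ Δφ holds in Ω, and (iii) the boundary conditions (−u_s φ e_g + κ ∇φ)·n = 0 on Γ₁ ∪ Γ₂ ∪ Γ₄ and ∇φ·n = 0 on Γ₃ hold. Then the total energy budget holds for each t: ∫_Ω [ u·∂u/∂t + (∂φ/∂t) y ] dx = − ν ∫_Ω (∇×ω)·u dx − u_s ∫_Ω φ dx + κ ∫_Ω ∇φ·e_g dx; i.e. d/dt(K + E_p) = −ε_v − ε_s with ε_v = ν ∫_Ω (∇×ω)·u dx and ε_s = u_s ∫_Ω φ dx − κ ∫_Ω ∇φ·e_g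 dx. -/

import Mathlib

open MeasureTheory Set

/-- Partial derivative in the first spatial direction. -/
noncomputable def d1 (f : ℝ × ℝ → ℝ) (x : ℝ × ℝ) : ℝ := fderiv ℝ f x ((1 : ℝ), (0 : ℝ))

/-- Partial derivative in the second spatial direction. -/
noncomputable def d2 (f : ℝ × ℝ → ℝ) (x : ℝ × ℝ) : ℝ := fderiv ℝ f x ((0 : ℝ), (1 : ℝ))

/-- Gradient of a scalar field on `ℝ²`. -/
noncomputable def grad (f : ℝ × ℝ → ℝ) (x : ℝ × ℝ) : ℝ × ℝ := (d1 f x, d2 f x)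

/-- Divergence of a vector field on `ℝ²`. -/
noncomputable def div2 (w : ℝ × ℝ → ℝ × ℝ) (x : ℝ × ℝ) : ℝ :=
  d1 (fun y => (w y).1) x + d2 (fun y => (w y).2) x

/-- Laplacian of a scalar field on `ℝ²`. -/
noncomputable def lap (f : ℝ × ℝ → ℝ) (x : ℝ × ℝ) : ℝ := d1 (d1 f) x + d2 (d2 f) x

/-- Dot product on `ℝ²`. -/
def dot (a b : ℝ × ℝ) : ℝ := a.1 * b.1 + a.2 * b.2

/-- Unit vector in the direction of gravity. -/
noncomputable def eg : ℝ × ℝ := ((0 : ℝ), (-1 : ℝ))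

/-! ### Auxiliary lemmas -/

lemma cont_d1 {f : ℝ×ℝ→ℝ} (hf : ContDiff ℝ 1 f) : Continuous (d1 f) :=
  (hf.continuous_fderiv one_ne_zero).clm_apply continuous_const

lemma cont_d2 {f : ℝ×ℝ→ℝ} (hf : ContDiff ℝ 1 f) : Continuous (d2 f) :=
  (hf.continuous_fderiv one_ne_zero).clm_apply continuous_const

lemma contDiff_d1 {f : ℝ×ℝ→ℝ} (hf : ContDiff ℝ 2 f) : ContDiff ℝ 1 (d1 f) :=
  (hf.fderiv_right (by norm_num)).clm_apply contDiff_const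

lemma contDiff_d2 {f : ℝ×ℝ→ℝ} (hf : ContDiff ℝ 2 f) : ContDiff ℝ 1 (d2 f) :=
  (hf.fderiv_right (by norm_num)).clm_apply contDiff_const

lemma hasDerivAt_d1 {f : ℝ×ℝ→ℝ} (hf : ContDiff ℝ 1 f) (a b : ℝ) :
    HasDerivAt (fun s => f (s, b)) (d1 f (a,b)) a := by
  have h1 : HasDerivAt (fun s : ℝ => ((s, b) : ℝ×ℝ)) ((1:ℝ), (0:ℝ)) a :=
    (hasDerivAt_id a).prodMk (hasDerivAt_const a b)
  exact ((hf.differentiable one_ne_zero (a,b)).hasFDerivAt).comp_hasDerivAt a h1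

lemma hasDerivAt_d2 {f : ℝ×ℝ→ℝ} (hf : ContDiff ℝ 1 f) (a b : ℝ) :
    HasDerivAt (fun s => f (a, s)) (d2 f (a,b)) b := by
  have h1 : HasDerivAt (fun s : ℝ => ((a, s) : ℝ×ℝ)) ((0:ℝ), (1:ℝ)) b :=
    (hasDerivAt_const b a).prodMk (hasDerivAt_id b)
  exact ((hf.differentiable one_ne_zero (a,b)).hasFDerivAt).comp_hasDerivAt b h1

lemma d1_mul {f g : ℝ×ℝ→ℝ} {x} (hf : DifferentiableAt ℝ f x) (hg : DifferentiableAt ℝ g x) :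
    d1 (fun y => f y * g y) x = d1 f x * g x + f x * d1 g x := by
  simp only [d1, fderiv_fun_mul hf hg, ContinuousLinearMap.add_apply,
    ContinuousLinearMap.smul_apply, smul_eq_mul]
  ring

lemma d2_mul {f g : ℝ×ℝ→ℝ} {x} (hf : DifferentiableAt ℝ f x) (hg : DifferentiableAt ℝ g x) :
    d2 (fun y => f y * g y) x = d2 f x * g x + f x * d2 g x := by
  simp only [d2, fderiv_fun_mul hf hg, ContinuousLinearMap.add_apply,
    ContinuousLinearMap.smul_apply, smul_eq_mul]
  ring

lemma d1_add {f g : ℝ×ℝ→ℝ} {x} (hf : DifferentiableAt ℝ f x) (hg : DifferentiableAt ℝ g x) :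
    d1 (fun y => f y + g y) x = d1 f x + d1 g x := by
  simp only [d1, fderiv_fun_add hf hg, ContinuousLinearMap.add_apply]

lemma d2_add {f g : ℝ×ℝ→ℝ} {x} (hf : DifferentiableAt ℝ f x) (hg : DifferentiableAt ℝ g x) :
    d2 (fun y => f y + g y) x = d2 f x + d2 g x := by
  simp only [d2, fderiv_fun_add hf hg, ContinuousLinearMap.add_apply]

lemma d1_sub {f g : ℝ×ℝ→ℝ} {x} (hf : DifferentiableAt ℝ f x) (hg : DifferentiableAt ℝ g x) :
    d1 (fun y => f y - g y) x = d1 f x - d1 g x := by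
  simp only [d1, fderiv_fun_sub hf hg, ContinuousLinearMap.sub_apply]

lemma d2_sub {f g : ℝ×ℝ→ℝ} {x} (hf : DifferentiableAt ℝ f x) (hg : DifferentiableAt ℝ g x) :
    d2 (fun y => f y - g y) x = d2 f x - d2 g x := by
  simp only [d2, fderiv_fun_sub hf hg, ContinuousLinearMap.sub_apply]

lemma d1_neg {f : ℝ×ℝ→ℝ} {x} : d1 (fun y => -(f y)) x = -(d1 f x) := by
  simp only [d1, fderiv_fun_neg, ContinuousLinearMap.neg_apply]

lemma d2_neg {f : ℝ×ℝ→ℝ} {x} : d2 (fun y => -(f y)) x = -(d2 f x) := by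
  simp only [d2, fderiv_fun_neg, ContinuousLinearMap.neg_apply]

lemma d1_const_mul {f : ℝ×ℝ→ℝ} {x} (hf : DifferentiableAt ℝ f x) (c : ℝ) :
    d1 (fun y => c * f y) x = c * d1 f x := by
  simp only [d1, fderiv_const_mul hf c, ContinuousLinearMap.smul_apply, smul_eq_mul]

lemma d2_const_mul {f : ℝ×ℝ→ℝ} {x} (hf : DifferentiableAt ℝ f x) (c : ℝ) :
    d2 (fun y => c * f y) x = c * d2 f x := by
  simp only [d2, fderiv_const_mul hf c, ContinuousLinearMap.smul_apply, smul_eq_mul]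

lemma d1_snd (x : ℝ×ℝ) : d1 (fun y : ℝ×ℝ => y.2) x = 0 := by
  simp [d1, (hasFDerivAt_snd (𝕜 := ℝ) (p := x)).fderiv]

lemma d2_snd (x : ℝ×ℝ) : d2 (fun y : ℝ×ℝ => y.2) x = 1 := by
  simp [d2, (hasFDerivAt_snd (𝕜 := ℝ) (p := x)).fderiv]

lemma int_d1_line {f : ℝ×ℝ→ℝ} (hf : ContDiff ℝ 1 f) {a b : ℝ} (hab : a ≤ b) (y : ℝ) :
    ∫ s in Ioo a b, d1 f (s, y) = f (b, y) - f (a, y) := by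
  rw [← integral_Ioc_eq_integral_Ioo, ← intervalIntegral.integral_of_le hab]
  exact intervalIntegral.integral_eq_sub_of_hasDerivAt
    (fun s _ => hasDerivAt_d1 hf s y)
    (((cont_d1 hf).comp (continuous_id.prodMk continuous_const)).intervalIntegrable a b)

lemma int_d2_line {f : ℝ×ℝ→ℝ} (hf : ContDiff ℝ 1 f) {a b : ℝ} (hab : a ≤ b) (x : ℝ) :
    ∫ s in Ioo a b, d2 f (x, s) = f (x, b) - f (x, a) := by
  rw [← integral_Ioc_eq_integral_Ioo, ← intervalIntegral.integral_of_le hab]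
  exact intervalIntegral.integral_eq_sub_of_hasDerivAt
    (fun s _ => hasDerivAt_d2 hf x s)
    (((cont_d2 hf).comp (continuous_const.prodMk continuous_id)).intervalIntegrable a b)

lemma integrableOn_rect {g : ℝ×ℝ→ℝ} (hg : Continuous g) (L : ℝ) :
    IntegrableOn g (Ioo 0 L ×ˢ Ioo (0:ℝ) 1) := by
  have h : IntegrableOn g (Icc 0 L ×ˢ Icc (0:ℝ) 1) :=
    hg.continuousOn.integrableOn_compact (isCompact_Icc.prod isCompact_Icc)
  exact h.mono_set (prod_mono Ioo_subset_Icc_self Ioo_subset_Icc_self)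

lemma int_d2_zero {g : ℝ×ℝ→ℝ} (hg : ContDiff ℝ 1 g) {L : ℝ} (hL : 0 < L)
    (h0 : ∀ s ∈ Icc 0 L, g (s, 0) = 0) (h1 : ∀ s ∈ Icc 0 L, g (s, 1) = 0) :
    ∫ x in Ioo 0 L ×ˢ Ioo (0:ℝ) 1, d2 g x = 0 := by
  have hint : IntegrableOn (d2 g) (Ioo 0 L ×ˢ Ioo (0:ℝ) 1) := integrableOn_rect (cont_d2 hg) L
  rw [Measure.volume_eq_prod] at hint ⊢
  rw [setIntegral_prod _ hint]
  rw [setIntegral_congr_fun measurableSet_Ioo (g := fun _ => (0:ℝ))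
    (fun s hs => by
      rw [int_d2_line hg (by norm_num) s, h0 s (Ioo_subset_Icc_self hs),
        h1 s (Ioo_subset_Icc_self hs), sub_zero])]
  simp

lemma int_d1_zero {g : ℝ×ℝ→ℝ} (hg : ContDiff ℝ 1 g) {L : ℝ} (hL : 0 < L)
    (h0 : ∀ s ∈ Icc (0:ℝ) 1, g (0, s) = 0) (h1 : ∀ s ∈ Icc (0:ℝ) 1, g (L, s) = 0) :
    ∫ x in Ioo 0 L ×ˢ Ioo (0:ℝ) 1, d1 g x = 0 := by
  have hint : IntegrableOn (d1 g) (Ioo 0 L ×ˢ Ioo (0:ℝ) 1) := integrableOn_rect (cont_d1 hg) L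
  rw [Measure.volume_eq_prod] at hint ⊢
  have hint2 : Integrable (d1 g)
      (((volume : Measure ℝ).restrict (Ioo 0 L)).prod
        ((volume : Measure ℝ).restrict (Ioo (0:ℝ) 1))) := by
    rw [Measure.prod_restrict]; exact hint
  have hp : (((volume : Measure ℝ).prod volume).restrict ((Ioo 0 L) ×ˢ (Ioo (0:ℝ) 1)))
      = ((volume : Measure ℝ).restrict (Ioo 0 L)).prod
        ((volume : Measure ℝ).restrict (Ioo (0:ℝ) 1)) := (Measure.prod_restrict _ _).symm
  show (∫ x, d1 g x ∂(((volume : Measure ℝ).prod volume).restrict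
    ((Ioo 0 L) ×ˢ (Ioo (0:ℝ) 1)))) = 0
  rw [hp, integral_prod_symm _ hint2]
  rw [setIntegral_congr_fun measurableSet_Ioo (g := fun _ => (0:ℝ))
    (fun s hs => by
      rw [int_d1_line hg hL.le s, h0 s (Ioo_subset_Icc_self hs),
        h1 s (Ioo_subset_Icc_self hs), sub_zero])]
  simp

/-- Total energy budget of the turbidity current: combining the momentum and
particle transport equations with the boundary conditions gives
`d/dt(K + E_p) = −ε_v − ε_s`, i.e.
`∫_Ω [u·∂u/∂t + (∂φ/∂t) y] = −ν ∫_Ω (∇×ω)·u − u_s ∫_Ω φ + κ ∫_Ω ∇φ·e_g`. -/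
theorem total_energy_budget
    (L T u_s ν κ : ℝ) (hL : 0 < L) (hν : 0 ≤ ν) (hκ : 0 < κ)
    (u : ℝ × ℝ → ℝ → ℝ × ℝ) (ω pbar φ : ℝ × ℝ → ℝ → ℝ)
    (hu : ContDiff ℝ 1 (fun p : (ℝ × ℝ) × ℝ => u p.1 p.2))
    (hω : ∀ t ∈ Icc (0 : ℝ) T, ContDiff ℝ 1 (fun x => ω x t))
    (hp : ∀ t ∈ Icc (0 : ℝ) T, ContDiff ℝ 1 (fun x => pbar x t))
    (hφspace : ∀ t ∈ Icc (0 : ℝ) T, ContDiff ℝ 2 (fun x => φ x t))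
    (hφtime : ContDiff ℝ 1 (fun p : (ℝ × ℝ) × ℝ => φ p.1 p.2))
    (hdiv : ∀ t ∈ Icc (0 : ℝ) T, ∀ x ∈ Ioo 0 L ×ˢ Ioo (0 : ℝ) 1, div2 (fun y => u y t) x = 0)
    (hbottom : ∀ t ∈ Icc (0 : ℝ) T, ∀ x ∈ Icc 0 L, (u (x, 0) t).2 = 0)
    (htop : ∀ t ∈ Icc (0 : ℝ) T, ∀ x ∈ Icc 0 L, (u (x, 1) t).2 = 0)
    (hleft : ∀ t ∈ Icc (0 : ℝ) T, ∀ y ∈ Icc (0 : ℝ) 1, (u (0, y) t).1 = 0)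
    (hright : ∀ t ∈ Icc (0 : ℝ) T, ∀ y ∈ Icc (0 : ℝ) 1, (u (L, y) t).1 = 0)
    (hmom : ∀ t ∈ Icc (0 : ℝ) T, ∀ x ∈ Ioo 0 L ×ˢ Ioo (0 : ℝ) 1,
      deriv (fun s => u x s) t + (ω x t) • (-(u x t).2, (u x t).1)
          + grad (fun y => pbar y t) x
        = (-ν) • (d2 (fun y => ω y t) x, -(d1 (fun y => ω y t) x)) + (φ x t) • eg)
    (htransport : ∀ t ∈ Icc (0 : ℝ) T, ∀ x ∈ Ioo 0 L ×ˢ Ioo (0 : ℝ) 1,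
      deriv (fun s => φ x s) t + dot (u x t + u_s • eg) (grad (fun y => φ y t) x)
        = κ * lap (fun y => φ y t) x)
    (hfluxtop : ∀ t ∈ Icc (0 : ℝ) T, ∀ x ∈ Icc 0 L,
      dot ((-(u_s * φ (x, 1) t)) • eg + κ • grad (fun y => φ y t) (x, 1)) ((0 : ℝ), 1) = 0)
    (hfluxleft : ∀ t ∈ Icc (0 : ℝ) T, ∀ y ∈ Icc (0 : ℝ) 1,
      dot ((-(u_s * φ (0, y) t)) • eg + κ • grad (fun z => φ z t) (0, y)) ((-1 : ℝ), 0) = 0)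
    (hfluxright : ∀ t ∈ Icc (0 : ℝ) T, ∀ y ∈ Icc (0 : ℝ) 1,
      dot ((-(u_s * φ (L, y) t)) • eg + κ • grad (fun z => φ z t) (L, y)) ((1 : ℝ), 0) = 0)
    (hfluxbottom : ∀ t ∈ Icc (0 : ℝ) T, ∀ x ∈ Icc 0 L,
      dot (grad (fun y => φ y t) (x, 0)) ((0 : ℝ), -1) = 0) :
    ∀ t ∈ Icc (0 : ℝ) T,
      (∫ x in Ioo 0 L ×ˢ Ioo (0 : ℝ) 1,
          (dot (u x t) (deriv (fun s => u x s) t) + (deriv (fun s => φ x s) t) * x.2))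
        = -(ν * ∫ x in Ioo 0 L ×ˢ Ioo (0 : ℝ) 1,
              dot (d2 (fun y => ω y t) x, -(d1 (fun y => ω y t) x)) (u x t))
          - u_s * (∫ x in Ioo 0 L ×ˢ Ioo (0 : ℝ) 1, φ x t)
          + κ * ∫ x in Ioo 0 L ×ˢ Ioo (0 : ℝ) 1, dot (grad (fun y => φ y t) x) eg := by
  intro t ht
  have hmapt : ContDiff ℝ 1 (fun x : ℝ × ℝ => ((x, t) : (ℝ × ℝ) × ℝ)) :=
    contDiff_id.prodMk contDiff_const
  have hU : ContDiff ℝ 1 (fun x => u x t) := hu.comp hmapt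
  have hU1 : ContDiff ℝ 1 (fun x => (u x t).1) := hU.fst
  have hU2 : ContDiff ℝ 1 (fun x => (u x t).2) := hU.snd
  have hP : ContDiff ℝ 1 (fun x => pbar x t) := hp t ht
  have hΦ2 : ContDiff ℝ 2 (fun x => φ x t) := hφspace t ht
  have hΦ : ContDiff ℝ 1 (fun x => φ x t) := hΦ2.of_le one_le_two
  have hW : ContDiff ℝ 1 (fun x => ω x t) := hω t ht
  have hd1Φ : ContDiff ℝ 1 (d1 (fun x => φ x t)) := contDiff_d1 hΦ2
  have hd2Φ : ContDiff ℝ 1 (d2 (fun x => φ x t)) := contDiff_d2 hΦ2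
  have hsnd : ContDiff ℝ 1 (fun x : ℝ × ℝ => x.2) := contDiff_snd
  set G1 : ℝ × ℝ → ℝ := fun x =>
    -(pbar x t * (u x t).1) - φ x t * x.2 * (u x t).1
      + κ * (d1 (fun y => φ y t) x * x.2) with hG1def
  set G2 : ℝ × ℝ → ℝ := fun x =>
    -(pbar x t * (u x t).2) - φ x t * x.2 * (u x t).2
      + (u_s * φ x t + κ * d2 (fun y => φ y t) x) * x.2 with hG2def
  have hG1c : ContDiff ℝ 1 G1 :=
    (((hP.mul hU1).neg).sub ((hΦ.mul hsnd).mul hU1)).add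
      (contDiff_const.mul (hd1Φ.mul hsnd))
  have hG2c : ContDiff ℝ 1 G2 :=
    (((hP.mul hU2).neg).sub ((hΦ.mul hsnd).mul hU2)).add
      (((contDiff_const.mul hΦ).add (contDiff_const.mul hd2Φ)).mul hsnd)
  -- boundary values
  have hG1left : ∀ s ∈ Icc (0:ℝ) 1, G1 (0, s) = 0 := by
    intro s hs
    have h1 : (u (0, s) t).1 = 0 := hleft t ht s hs
    have h2 : d1 (fun y => φ y t) (0, s) = 0 := by
      have hfl := hfluxleft t ht s hs
      simp only [dot, grad, eg, Prod.fst_add, Prod.snd_add, Prod.smul_fst, Prod.smul_snd,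
        smul_eq_mul] at hfl
      have : κ * d1 (fun y => φ y t) (0, s) = 0 := by linarith
      exact (mul_eq_zero.mp this).resolve_left hκ.ne'
    simp [hG1def, h1, h2]
  have hG1right : ∀ s ∈ Icc (0:ℝ) 1, G1 (L, s) = 0 := by
    intro s hs
    have h1 : (u (L, s) t).1 = 0 := hright t ht s hs
    have h2 : d1 (fun y => φ y t) (L, s) = 0 := by
      have hfl := hfluxright t ht s hs
      simp only [dot, grad, eg, Prod.fst_add, Prod.snd_add, Prod.smul_fst, Prod.smul_snd,
        smul_eq_mul] at hfl
      have : κ * d1 (fun y => φ y t) (L, s) = 0 := by linarith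
      exact (mul_eq_zero.mp this).resolve_left hκ.ne'
    simp [hG1def, h1, h2]
  have hG2bot : ∀ s ∈ Icc 0 L, G2 (s, 0) = 0 := by
    intro s hs
    have h1 : (u (s, 0) t).2 = 0 := hbottom t ht s hs
    simp [hG2def, h1]
  have hG2top : ∀ s ∈ Icc 0 L, G2 (s, 1) = 0 := by
    intro s hs
    have h1 : (u (s, 1) t).2 = 0 := htop t ht s hs
    have h2 : u_s * φ (s, 1) t + κ * d2 (fun y => φ y t) (s, 1) = 0 := by
      have hfl := hfluxtop t ht s hs
      simp only [dot, grad, eg, Prod.fst_add, Prod.snd_add, Prod.smul_fst, Prod.smul_snd,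
        smul_eq_mul] at hfl
      linarith
    simp [hG2def, h1, h2]
  -- pointwise identity on the rectangle
  have key : ∀ x ∈ Ioo 0 L ×ˢ Ioo (0 : ℝ) 1,
      dot (u x t) (deriv (fun s => u x s) t) + (deriv (fun s => φ x s) t) * x.2
        = (-(ν * dot (d2 (fun y => ω y t) x, -(d1 (fun y => ω y t) x)) (u x t))
            - u_s * φ x t + κ * dot (grad (fun y => φ y t) x) eg)
          + (d1 G1 x + d2 G2 x) := by
    intro x hx
    have dP : DifferentiableAt ℝ (fun y => pbar y t) x := hP.differentiable one_ne_zero x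
    have dU1 : DifferentiableAt ℝ (fun y => (u y t).1) x := hU1.differentiable one_ne_zero x
    have dU2 : DifferentiableAt ℝ (fun y => (u y t).2) x := hU2.differentiable one_ne_zero x
    have dΦ : DifferentiableAt ℝ (fun y => φ y t) x := hΦ.differentiable one_ne_zero x
    have dd1Φ : DifferentiableAt ℝ (d1 (fun y => φ y t)) x := hd1Φ.differentiable one_ne_zero x
    have dd2Φ : DifferentiableAt ℝ (d2 (fun y => φ y t)) x := hd2Φ.differentiable one_ne_zero x
    have dsnd : DifferentiableAt ℝ (fun y : ℝ × ℝ => y.2) x := differentiableAt_snd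
    have e1 : d1 G1 x
        = -(d1 (fun y => pbar y t) x * (u x t).1 + pbar x t * d1 (fun y => (u y t).1) x)
          - ((d1 (fun y => φ y t) x * x.2 + φ x t * 0) * (u x t).1
              + (φ x t * x.2) * d1 (fun y => (u y t).1) x)
          + κ * (d1 (d1 (fun y => φ y t)) x * x.2 + d1 (fun y => φ y t) x * 0) := by
      rw [hG1def]
      rw [d1_add (((dP.fun_mul dU1).fun_neg).fun_sub ((dΦ.fun_mul dsnd).fun_mul dU1))
            ((dd1Φ.fun_mul dsnd).const_mul κ),
          d1_sub ((dP.fun_mul dU1).fun_neg) ((dΦ.fun_mul dsnd).fun_mul dU1),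
          d1_neg, d1_mul dP dU1, d1_mul (dΦ.fun_mul dsnd) dU1, d1_mul dΦ dsnd,
          d1_const_mul (dd1Φ.fun_mul dsnd) κ, d1_mul dd1Φ dsnd, d1_snd]
    have e2 : d2 G2 x
        = -(d2 (fun y => pbar y t) x * (u x t).2 + pbar x t * d2 (fun y => (u y t).2) x)
          - ((d2 (fun y => φ y t) x * x.2 + φ x t * 1) * (u x t).2
              + (φ x t * x.2) * d2 (fun y => (u y t).2) x)
          + ((u_s * d2 (fun y => φ y t) x + κ * d2 (d2 (fun y => φ y t)) x) * x.2
              + (u_s * φ x t + κ * d2 (fun y => φ y t) x) * 1) := by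
      rw [hG2def]
      rw [d2_add (((dP.fun_mul dU2).fun_neg).fun_sub ((dΦ.fun_mul dsnd).fun_mul dU2))
            (((dΦ.const_mul u_s).fun_add (dd2Φ.const_mul κ)).fun_mul dsnd),
          d2_sub ((dP.fun_mul dU2).fun_neg) ((dΦ.fun_mul dsnd).fun_mul dU2),
          d2_neg, d2_mul dP dU2, d2_mul (dΦ.fun_mul dsnd) dU2, d2_mul dΦ dsnd,
          d2_mul ((dΦ.const_mul u_s).fun_add (dd2Φ.const_mul κ)) dsnd,
          d2_add (dΦ.const_mul u_s) (dd2Φ.const_mul κ),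
          d2_const_mul dΦ u_s, d2_const_mul dd2Φ κ, d2_snd]
    have hm := hmom t ht x hx
    have hm1 := congrArg Prod.fst hm
    have hm2 := congrArg Prod.snd hm
    simp only [grad, eg, Prod.fst_add, Prod.snd_add, Prod.smul_fst, Prod.smul_snd,
      smul_eq_mul] at hm1 hm2
    have htr := htransport t ht x hx
    simp only [dot, grad, eg, lap, Prod.fst_add, Prod.snd_add, Prod.smul_fst, Prod.smul_snd,
      smul_eq_mul] at htr
    have hdv := hdiv t ht x hx
    simp only [div2] at hdv
    have hD1 : (deriv (fun s => u x s) t).1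
        = -ν * d2 (fun y => ω y t) x + φ x t * 0 - ω x t * (-(u x t).2)
          - d1 (fun y => pbar y t) x := by linarith
    have hD2 : (deriv (fun s => u x s) t).2
        = -ν * (-(d1 (fun y => ω y t) x)) + φ x t * (-1) - ω x t * (u x t).1
          - d2 (fun y => pbar y t) x := by linarith
    have hDφ : deriv (fun s => φ x s) t
        = κ * (d1 (d1 (fun y => φ y t)) x + d2 (d2 (fun y => φ y t)) x)
          - (((u x t).1 + u_s * 0) * d1 (fun y => φ y t) x
              + ((u x t).2 + u_s * (-1)) * d2 (fun y => φ y t) x) := by linarith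
    have hd1U1 : d1 (fun y => (u y t).1) x = -(d2 (fun y => (u y t).2) x) := by linarith
    rw [e1, e2]
    simp only [dot, grad, eg, smul_eq_mul]
    rw [hD1, hD2, hDφ, hd1U1]
    ring
  -- integrability
  have c1 : Continuous (fun x =>
      dot (d2 (fun y => ω y t) x, -(d1 (fun y => ω y t) x)) (u x t)) := by
    simp only [dot]
    exact ((cont_d2 hW).mul hU1.continuous).add ((cont_d1 hW).neg.mul hU2.continuous)
  have c3 : Continuous (fun x => dot (grad (fun y => φ y t) x) eg) := by
    simp only [dot, grad, eg]
    exact ((cont_d1 hΦ).mul continuous_const).add ((cont_d2 hΦ).mul continuous_const)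
  have iB1 : IntegrableOn (fun x =>
      -(ν * dot (d2 (fun y => ω y t) x, -(d1 (fun y => ω y t) x)) (u x t)))
      (Ioo 0 L ×ˢ Ioo (0:ℝ) 1) :=
    (integrableOn_rect (continuous_const.mul c1) L).neg
  have iB2 : IntegrableOn (fun x => u_s * φ x t) (Ioo 0 L ×ˢ Ioo (0:ℝ) 1) :=
    integrableOn_rect (continuous_const.mul hΦ.continuous) L
  have iB3 : IntegrableOn (fun x => κ * dot (grad (fun y => φ y t) x) eg)
      (Ioo 0 L ×ˢ Ioo (0:ℝ) 1) :=
    integrableOn_rect (continuous_const.mul c3) L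
  have iG1 : IntegrableOn (fun x => d1 G1 x) (Ioo 0 L ×ˢ Ioo (0:ℝ) 1) :=
    integrableOn_rect (cont_d1 hG1c) L
  have iG2 : IntegrableOn (fun x => d2 G2 x) (Ioo 0 L ×ˢ Ioo (0:ℝ) 1) :=
    integrableOn_rect (cont_d2 hG2c) L
  have hSm : MeasurableSet (Ioo (0:ℝ) L ×ˢ Ioo (0:ℝ) 1) :=
    measurableSet_Ioo.prod measurableSet_Ioo
  have iB12 : IntegrableOn (fun x =>
      -(ν * dot (d2 (fun y => ω y t) x, -(d1 (fun y => ω y t) x)) (u x t)) - u_s * φ x t)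
      (Ioo 0 L ×ˢ Ioo (0:ℝ) 1) := iB1.sub iB2
  have iB : IntegrableOn (fun x =>
      -(ν * dot (d2 (fun y => ω y t) x, -(d1 (fun y => ω y t) x)) (u x t)) - u_s * φ x t
        + κ * dot (grad (fun y => φ y t) x) eg)
      (Ioo 0 L ×ˢ Ioo (0:ℝ) 1) := iB12.add iB3
  have iG : IntegrableOn (fun x => d1 G1 x + d2 G2 x) (Ioo 0 L ×ˢ Ioo (0:ℝ) 1) :=
    iG1.add iG2
  rw [setIntegral_congr_fun hSm key]
  rw [integral_add iB iG, integral_add iG1 iG2]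
  rw [int_d1_zero hG1c hL hG1left hG1right, int_d2_zero hG2c hL hG2bot hG2top, add_zero,
    add_zero]
  rw [integral_add iB12 iB3, integral_sub iB1 iB2, integral_neg,
    integral_const_mul, integral_const_mul, integral_const_mul]
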